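/- Let C be a symmetric monoidal category with unit object 𝟙 having finite colimits and such that the tensor product preserves finite colimits in each variable. Let (C₁, c₁) and (C₂, c₂) be coidempotent objects, and form the pushout V of the span C₁ ← C₁ ⊗ C₂ → C₂, where the two legs are id_{C₁} ⊗ c₂ (followed by the right unitor) and c₁ ⊗ id_{C₂} (followed by the left unitor); let v : V → 𝟙 be the morphism induced by c₁ and c₂. Then (V, v) is a coidempotent object, and it is a least upper bound of (C₁, c₁) and (C₂, c₂) in the preorder of coidempotent objects: both admit morphisms of coidempotent objects to (V, v), and any coidempotent object (D, d) admitting morphisms of coidempotent objects from both (C₁, c₁) and (C₂, c₂) admits one from (V, v). -/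

import Mathlib

open CategoryTheory CategoryTheory.Limits MonoidalCategory

universe v u

variable {C : Type u} [Category.{v} C] [MonoidalCategory C]

/-- `c : C₀ ⟶ 𝟙` is a coidempotent object if `C₀ ◁ c : C₀ ⊗ C₀ ⟶ C₀ ⊗ 𝟙` is invertible. -/
def Coidempotent {C₀ : C} (c : C₀ ⟶ 𝟙_ C) : Prop := IsIso (C₀ ◁ c)

/-- The first leg `C₁ ⊗ C₂ ⟶ C₁` (i.e. `id_{C₁} ⊗ c₂` followed by the right unitor) of the
span whose pushout computes the join of two coidempotent objects. -/
def joinFst {C₁ C₂ : C} (_ : C₁ ⟶ 𝟙_ C) (c₂ : C₂ ⟶ 𝟙_ C) : C₁ ⊗ C₂ ⟶ C₁ :=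
  (C₁ ◁ c₂) ≫ (ρ_ C₁).hom

/-- The second leg `C₁ ⊗ C₂ ⟶ C₂` (i.e. `c₁ ⊗ id_{C₂}` followed by the left unitor) of the
span whose pushout computes the join of two coidempotent objects. -/
def joinSnd {C₁ C₂ : C} (c₁ : C₁ ⟶ 𝟙_ C) (_ : C₂ ⟶ 𝟙_ C) : C₁ ⊗ C₂ ⟶ C₂ :=
  (c₁ ▷ C₂) ≫ (λ_ C₂).hom

lemma tensorLeft_map (X : C) {Y Z : C} (f : Y ⟶ Z) : (tensorLeft X).map f = X ◁ f := rfl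

lemma tensorRight_map (X : C) {Y Z : C} (f : Y ⟶ Z) : (tensorRight X).map f = f ▷ X := rfl

/-- If `Y ◁ c` is invertible, so is `(X ⊗ Y) ◁ c`. -/
lemma isIso_tensor_whiskerLeft (X : C) {Y Z W : C} (c : Z ⟶ W) (h : IsIso (Y ◁ c)) :
    IsIso ((X ⊗ Y) ◁ c) := by
  have e : (X ⊗ Y) ◁ c = (α_ X Y Z).hom ≫ (X ◁ (Y ◁ c)) ≫ (α_ X Y W).inv := by
    rw [← associator_naturality_right_assoc, Iso.hom_inv_id, Category.comp_id]
  rw [e]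
  haveI := h
  infer_instance

/-- Invertibility of `X ◁ c` is invariant under isomorphism in `X`. -/
lemma isIso_whiskerLeft_of_iso {X X' Y W : C} (e : X ≅ X') (c : Y ⟶ W) (h : IsIso (X ◁ c)) :
    IsIso (X' ◁ c) := by
  have he : X' ◁ c = (e.inv ▷ Y) ≫ (X ◁ c) ≫ (e.hom ▷ W) := by
    rw [whisker_exchange, ← comp_whiskerRight_assoc, Iso.inv_hom_id, id_whiskerRight,
      Category.id_comp]
  rw [he]
  haveI := h
  infer_instance

/-- Naturality of the "collapse the right factor" map. -/
lemma coidem_Rnat {A X Y : C} (d : A ⟶ 𝟙_ C) (q : X ⟶ Y) :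
    q ▷ A ≫ Y ◁ d ≫ (ρ_ Y).hom = X ◁ d ≫ (ρ_ X).hom ≫ q := by
  rw [← whisker_exchange_assoc, MonoidalCategory.rightUnitor_naturality]

/-- Naturality of the "collapse the left factor" map. -/
lemma coidem_Lnat {A X Y : C} (d : A ⟶ 𝟙_ C) (q : X ⟶ Y) :
    A ◁ q ≫ d ▷ Y ≫ (λ_ Y).hom = d ▷ X ≫ (λ_ X).hom ≫ q := by
  rw [whisker_exchange_assoc, MonoidalCategory.leftUnitor_naturality]

/-- The (dual) Boyarchenko–Drinfeld commutativity lemma: for a coidempotent object `(A, d)`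
in a braided category, collapsing the left or the right factor of `A ⊗ A` via `d` agree. -/
lemma coidem_comm [BraidedCategory C] {A : C} (d : A ⟶ 𝟙_ C) (h : IsIso (A ◁ d)) :
    (A ◁ d) ≫ (ρ_ A).hom = (d ▷ A) ≫ (λ_ A).hom := by
  haveI := h
  -- `d ▷ A` is invertible, via the braiding
  haveI hdr : IsIso (d ▷ A) := by
    have e : d ▷ A = (β_ A A).hom ≫ A ◁ d ≫ (β_ (𝟙_ C) A).inv := by
      rw [← BraidedCategory.braiding_naturality_left_assoc, Iso.hom_inv_id, Category.comp_id]
    rw [e]; infer_instance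
  -- hence so is `d ▷ (A ⊗ A)`
  haveI hdAA : IsIso (d ▷ (A ⊗ A)) := by
    have e : d ▷ (A ⊗ A) = (α_ A A A).inv ≫ (d ▷ A) ▷ A ≫ (α_ (𝟙_ C) A A).hom := by
      rw [associator_naturality_left, Iso.inv_hom_id_assoc]
    rw [e]; infer_instance
  have sub1 : (α_ A A A).hom ≫ A ◁ (A ◁ d ≫ (ρ_ A).hom) = (A ⊗ A) ◁ d ≫ (ρ_ (A ⊗ A)).hom := by
    rw [MonoidalCategory.whiskerLeft_comp, ← associator_naturality_right_assoc,
      ← rightUnitor_tensor_hom]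
  have sub3 : (α_ A A A).hom ≫ A ◁ (d ▷ A ≫ (λ_ A).hom) = (A ◁ d ≫ (ρ_ A).hom) ▷ A := by
    rw [MonoidalCategory.whiskerLeft_comp, ← associator_naturality_middle_assoc,
      MonoidalCategory.triangle, ← comp_whiskerRight]
  have h1 : (α_ A A A).hom ≫ A ◁ (A ◁ d ≫ (ρ_ A).hom) ≫ A ◁ d ≫ (ρ_ A).hom
      = (α_ A A A).hom ≫ A ◁ (d ▷ A ≫ (λ_ A).hom) ≫ A ◁ d ≫ (ρ_ A).hom := by
    conv_lhs => rw [← Category.assoc, sub1, Category.assoc,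
      ← coidem_Rnat d (A ◁ d ≫ (ρ_ A).hom)]
    conv_rhs => rw [← Category.assoc, sub3]
  have key : A ◁ (A ◁ d ≫ (ρ_ A).hom) = A ◁ (d ▷ A ≫ (λ_ A).hom) := by
    rw [cancel_epi (α_ A A A).hom] at h1
    haveI : IsIso (A ◁ d ≫ (ρ_ A).hom) := by infer_instance
    exact (cancel_mono (A ◁ d ≫ (ρ_ A).hom)).mp h1
  have n1 := coidem_Lnat d (A ◁ d ≫ (ρ_ A).hom)
  have n2 := coidem_Lnat d (d ▷ A ≫ (λ_ A).hom)
  rw [key, n2] at n1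
  rw [cancel_epi (d ▷ (A ⊗ A)), cancel_epi (λ_ (A ⊗ A)).hom] at n1
  exact n1.symm

/-- If the right leg of a span becomes invertible after whiskering with `X`, then
`X ◁ pushout.inl` is invertible. -/
lemma isIso_whiskerLeft_pushout_inl (X : C) {W Y Z : C} (f : W ⟶ Y) (g : W ⟶ Z)
    [HasPushout f g] [HasPushout (X ◁ f) (X ◁ g)]
    [PreservesColimit (span f g) (tensorLeft X)] (hg : IsIso (X ◁ g)) :
    IsIso (X ◁ pushout.inl f g) := by
  haveI := hg
  haveI hg' : IsIso ((tensorLeft X).map g) := by rw [tensorLeft_map]; exact hg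
  haveI hp : HasPushout ((tensorLeft X).map f) ((tensorLeft X).map g) := by
    rw [tensorLeft_map, tensorLeft_map]; infer_instance
  have e := PreservesPushout.inl_iso_hom (tensorLeft X) f g
  show IsIso ((tensorLeft X).map (pushout.inl f g))
  rw [← e]
  infer_instance

/-- If the left leg of a span becomes invertible after whiskering with `X`, then
`X ◁ pushout.inr` is invertible. -/
lemma isIso_whiskerLeft_pushout_inr (X : C) {W Y Z : C} (f : W ⟶ Y) (g : W ⟶ Z)
    [HasPushout f g] [HasPushout (X ◁ f) (X ◁ g)]
    [PreservesColimit (span f g) (tensorLeft X)] (hf : IsIso (X ◁ f)) :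
    IsIso (X ◁ pushout.inr f g) := by
  haveI := hf
  haveI hf' : IsIso ((tensorLeft X).map f) := by rw [tensorLeft_map]; exact hf
  haveI hp : HasPushout ((tensorLeft X).map f) ((tensorLeft X).map g) := by
    rw [tensorLeft_map, tensorLeft_map]; infer_instance
  have e := PreservesPushout.inr_iso_hom (tensorLeft X) f g
  show IsIso ((tensorLeft X).map (pushout.inr f g))
  rw [← e]
  infer_instance

/-- Let `C` be a symmetric monoidal category with finite colimits whose
tensor product preserves finite colimits in each variable.  Given coidempotent objects
`(C₁, c₁)` and `(C₂, c₂)`, let `V` be the pushout of `C₁ ⟵ C₁ ⊗ C₂ ⟶ C₂` (legs as above)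
and `v : V ⟶ 𝟙` the morphism induced by `c₁` and `c₂`.  Then `(V, v)` is a coidempotent
object and is a least upper bound of `(C₁, c₁)` and `(C₂, c₂)` in the preorder of
coidempotent objects. -/
theorem coidempotent_join [SymmetricCategory C] [HasFiniteColimits C]
    (hL : ∀ X : C, PreservesFiniteColimits (tensorLeft X))
    (hR : ∀ X : C, PreservesFiniteColimits (tensorRight X))
    {C₁ C₂ : C} (c₁ : C₁ ⟶ 𝟙_ C) (c₂ : C₂ ⟶ 𝟙_ C)
    (h₁ : Coidempotent c₁) (h₂ : Coidempotent c₂)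
    (v : pushout (joinFst c₁ c₂) (joinSnd c₁ c₂) ⟶ 𝟙_ C)
    (hv₁ : pushout.inl _ _ ≫ v = c₁) (hv₂ : pushout.inr _ _ ≫ v = c₂) :
    Coidempotent v ∧
      (∃ f : C₁ ⟶ pushout (joinFst c₁ c₂) (joinSnd c₁ c₂), f ≫ v = c₁) ∧
      (∃ f : C₂ ⟶ pushout (joinFst c₁ c₂) (joinSnd c₁ c₂), f ≫ v = c₂) ∧
      ∀ {D : C} (d : D ⟶ 𝟙_ C), Coidempotent d →
        (∃ f : C₁ ⟶ D, f ≫ d = c₁) → (∃ f : C₂ ⟶ D, f ≫ d = c₂) →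
        ∃ g : pushout (joinFst c₁ c₂) (joinSnd c₁ c₂) ⟶ D, g ≫ d = v := by
  haveI hi₁ : IsIso (C₁ ◁ c₁) := h₁
  haveI hi₂ : IsIso (C₂ ◁ c₂) := h₂
  haveI := hL C₁; haveI := hL C₂
  haveI := hR (pushout (joinFst c₁ c₂) (joinSnd c₁ c₂)); haveI := hR (𝟙_ C)
  -- `C₁ ◁ joinSnd` is invertible
  haveI hC₁g : IsIso (C₁ ◁ joinSnd c₁ c₂) := by
    haveI : IsIso (C₁ ◁ (c₁ ▷ C₂)) := by rw [whisker_assoc_symm]; infer_instance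
    rw [joinSnd, MonoidalCategory.whiskerLeft_comp]; infer_instance
  -- `C₂ ◁ joinFst` is invertible
  haveI hC₂f : IsIso (C₂ ◁ joinFst c₁ c₂) := by
    haveI h12 : IsIso ((C₁ ⊗ C₂) ◁ c₂) := isIso_tensor_whiskerLeft C₁ c₂ hi₂
    haveI h21 : IsIso ((C₂ ⊗ C₁) ◁ c₂) := isIso_whiskerLeft_of_iso (β_ C₁ C₂) c₂ h12
    haveI : IsIso (C₂ ◁ (C₁ ◁ c₂)) := by rw [tensor_whiskerLeft_symm]; infer_instance
    rw [joinFst, MonoidalCategory.whiskerLeft_comp]; infer_instance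
  haveI hinl : IsIso (C₁ ◁ pushout.inl (joinFst c₁ c₂) (joinSnd c₁ c₂)) :=
    isIso_whiskerLeft_pushout_inl C₁ _ _ hC₁g
  haveI hinr : IsIso (C₂ ◁ pushout.inr (joinFst c₁ c₂) (joinSnd c₁ c₂)) :=
    isIso_whiskerLeft_pushout_inr C₂ _ _ hC₂f
  -- `C₁ ◁ v`, `C₂ ◁ v`, `(C₁ ⊗ C₂) ◁ v` are invertible
  haveI hw1 : IsIso (C₁ ◁ v) := by
    haveI : IsIso ((C₁ ◁ pushout.inl (joinFst c₁ c₂) (joinSnd c₁ c₂)) ≫ (C₁ ◁ v)) := by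
      rw [← MonoidalCategory.whiskerLeft_comp, hv₁]; exact hi₁
    exact IsIso.of_isIso_comp_left (C₁ ◁ pushout.inl (joinFst c₁ c₂) (joinSnd c₁ c₂)) (C₁ ◁ v)
  haveI hw2 : IsIso (C₂ ◁ v) := by
    haveI : IsIso ((C₂ ◁ pushout.inr (joinFst c₁ c₂) (joinSnd c₁ c₂)) ≫ (C₂ ◁ v)) := by
      rw [← MonoidalCategory.whiskerLeft_comp, hv₂]; exact hi₂
    exact IsIso.of_isIso_comp_left (C₂ ◁ pushout.inr (joinFst c₁ c₂) (joinSnd c₁ c₂)) (C₂ ◁ v)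
  haveI hw12 : IsIso ((C₁ ⊗ C₂) ◁ v) := isIso_tensor_whiskerLeft C₁ v hw2
  -- Coidempotence of `v`
  have hcoid : Coidempotent v := by
    show IsIso (pushout (joinFst c₁ c₂) (joinSnd c₁ c₂) ◁ v)
    have eq1 : (tensorRight (pushout (joinFst c₁ c₂) (joinSnd c₁ c₂))).map (joinFst c₁ c₂) ≫
        (C₁ ◁ v) = ((C₁ ⊗ C₂) ◁ v) ≫ (tensorRight (𝟙_ C)).map (joinFst c₁ c₂) := by
      rw [tensorRight_map, tensorRight_map]; exact (whisker_exchange (joinFst c₁ c₂) v).symm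
    have eq2 : (tensorRight (pushout (joinFst c₁ c₂) (joinSnd c₁ c₂))).map (joinSnd c₁ c₂) ≫
        (C₂ ◁ v) = ((C₁ ⊗ C₂) ◁ v) ≫ (tensorRight (𝟙_ C)).map (joinSnd c₁ c₂) := by
      rw [tensorRight_map, tensorRight_map]; exact (whisker_exchange (joinSnd c₁ c₂) v).symm
    have heq : (PreservesPushout.iso (tensorRight (pushout (joinFst c₁ c₂) (joinSnd c₁ c₂)))
          (joinFst c₁ c₂) (joinSnd c₁ c₂)).hom ≫
          (pushout (joinFst c₁ c₂) (joinSnd c₁ c₂) ◁ v) =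
        pushout.map _ _ _ _ (C₁ ◁ v) (C₂ ◁ v) ((C₁ ⊗ C₂) ◁ v) eq1 eq2 ≫
          (PreservesPushout.iso (tensorRight (𝟙_ C)) (joinFst c₁ c₂) (joinSnd c₁ c₂)).hom := by
      apply pushout.hom_ext
      · rw [PreservesPushout.inl_iso_hom_assoc, tensorRight_map, ← whisker_exchange,
          pushout.inl_desc_assoc, Category.assoc, PreservesPushout.inl_iso_hom, tensorRight_map]
      · rw [PreservesPushout.inr_iso_hom_assoc, tensorRight_map, ← whisker_exchange,
          pushout.inr_desc_assoc, Category.assoc, PreservesPushout.inr_iso_hom, tensorRight_map]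
    have e : pushout (joinFst c₁ c₂) (joinSnd c₁ c₂) ◁ v =
        (PreservesPushout.iso (tensorRight (pushout (joinFst c₁ c₂) (joinSnd c₁ c₂)))
          (joinFst c₁ c₂) (joinSnd c₁ c₂)).inv ≫
        (pushout.map _ _ _ _ (C₁ ◁ v) (C₂ ◁ v) ((C₁ ⊗ C₂) ◁ v) eq1 eq2 ≫
          (PreservesPushout.iso (tensorRight (𝟙_ C)) (joinFst c₁ c₂) (joinSnd c₁ c₂)).hom) := by
      rw [← heq, Iso.inv_hom_id_assoc]
    rw [e]
    infer_instance
  refine ⟨hcoid, ⟨pushout.inl _ _, hv₁⟩, ⟨pushout.inr _ _, hv₂⟩, ?_⟩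
  rintro D d hd ⟨f₁, hf₁⟩ ⟨f₂, hf₂⟩
  have comm := coidem_comm d hd
  have u1 : (f₁ ⊗ₘ f₂) ≫ (D ◁ d) ≫ (ρ_ D).hom = joinFst c₁ c₂ ≫ f₁ := by
    rw [MonoidalCategory.tensorHom_def, Category.assoc, ← MonoidalCategory.whiskerLeft_comp_assoc, hf₂,
      ← whisker_exchange_assoc, MonoidalCategory.rightUnitor_naturality, joinFst,
      Category.assoc]
  have u2 : (f₁ ⊗ₘ f₂) ≫ (d ▷ D) ≫ (λ_ D).hom = joinSnd c₁ c₂ ≫ f₂ := by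
    rw [MonoidalCategory.tensorHom_def', Category.assoc, ← comp_whiskerRight_assoc, hf₁,
      whisker_exchange_assoc, MonoidalCategory.leftUnitor_naturality, joinSnd,
      Category.assoc]
  have w : joinFst c₁ c₂ ≫ f₁ = joinSnd c₁ c₂ ≫ f₂ := by rw [← u1, ← u2, comm]
  refine ⟨pushout.desc f₁ f₂ w, ?_⟩
  apply pushout.hom_ext
  · rw [pushout.inl_desc_assoc, hf₁, hv₁]
  · rw [pushout.inr_desc_assoc, hf₂, hv₂]
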